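/- Suppose φ: P → {0,1,2}^n and ψ: L → {0,1,2}^n are injections whose images are trifferent codes, where P are the points and L the affine lines of F_q^2, and for each ℓ ∈ L let σ_ℓ be a fixed-point-free permutation of the points of ℓ. Define τ on incidences S = {(p,ℓ) : p ∈ ℓ} by τ(p,ℓ) = (φ(p), ψ(ℓ), φ(σ_ℓ(p))) ∈ {0,1,2}^(3n). Then the image of τ is a trifferent code of size q^3 + q^2 in {0,1,2}^(3n). -/

import Mathlib

/-- Trifference for codes indexed by an arbitrary coordinate set. -/
def TrifferentSet {ι : Type*} (C : Set (ι → Fin 3)) : Prop :=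
  ∀ x ∈ C, ∀ y ∈ C, ∀ z ∈ C, x ≠ y → x ≠ z → y ≠ z →
    ∃ i : ι, ({x i, y i, z i} : Set (Fin 3)) = Set.univ

def IsAffineLine (F : Type*) [Field F] (ℓ : Set (F × F)) : Prop :=
  ∃ v d : F × F, d ≠ 0 ∧ ℓ = {p | ∃ t : F, p = v + t • d}

section Aux
variable {F : Type*} [Field F]

lemma line_canon (ℓ : Set (F × F)) (h : IsAffineLine F ℓ) (a b : F × F)
    (hab : a ≠ b) (ha : a ∈ ℓ) (hb : b ∈ ℓ) :
    ℓ = {p | ∃ t : F, p = a + t • (b - a)} := by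
  obtain ⟨v, d, hd, rfl⟩ := h
  obtain ⟨s, rfl⟩ := ha
  obtain ⟨u, hu⟩ := hb
  have hsu : u - s ≠ 0 := by
    intro h0
    exact hab (by rw [hu, sub_eq_zero.mp h0])
  have hba : b - (v + s • d) = (u - s) • d := by rw [hu]; module
  ext p
  simp only [Set.mem_setOf_eq]
  constructor
  · rintro ⟨t, rfl⟩
    refine ⟨(t - s)/(u - s), ?_⟩
    rw [hba, smul_smul, div_mul_cancel₀ _ hsu]
    module
  · rintro ⟨r, rfl⟩
    refine ⟨s + r * (u - s), ?_⟩
    rw [hba, smul_smul]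
    module

lemma line_eq_of_two {ℓ1 ℓ2 : Set (F × F)} (h1 : IsAffineLine F ℓ1) (h2 : IsAffineLine F ℓ2)
    {a b : F × F} (hab : a ≠ b) (ha1 : a ∈ ℓ1) (hb1 : b ∈ ℓ1) (ha2 : a ∈ ℓ2) (hb2 : b ∈ ℓ2) :
    ℓ1 = ℓ2 :=
  (line_canon ℓ1 h1 a b hab ha1 hb1).trans (line_canon ℓ2 h2 a b hab ha2 hb2).symm

lemma pattern' (σ : ∀ ℓ : {ℓ : Set (F × F) // IsAffineLine F ℓ},
      (ℓ : Set (F × F)) ≃ (ℓ : Set (F × F)))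
    (hσ : ∀ ℓ, ∀ x, σ ℓ x ≠ x)
    (ℓ1 ℓ2 : {ℓ : Set (F × F) // IsAffineLine F ℓ}) (p1 p3 : F × F)
    (h11 : p1 ∈ ℓ1.val) (h12 : p1 ∈ ℓ2.val) (h32 : p3 ∈ ℓ2.val)
    (hl : ℓ1 ≠ ℓ2) (hp : p1 ≠ p3) :
    ((σ ℓ1 ⟨p1, h11⟩ : F × F) ≠ (σ ℓ2 ⟨p1, h12⟩ : F × F)) ∧
    ((σ ℓ1 ⟨p1, h11⟩ : F × F) ≠ (σ ℓ2 ⟨p3, h32⟩ : F × F)) ∧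
    ((σ ℓ2 ⟨p1, h12⟩ : F × F) ≠ (σ ℓ2 ⟨p3, h32⟩ : F × F)) := by
  have hA1 : ((σ ℓ1 ⟨p1, h11⟩ : F × F)) ∈ ℓ1.val := (σ ℓ1 ⟨p1, h11⟩).2
  have hAp : ((σ ℓ1 ⟨p1, h11⟩ : F × F)) ≠ p1 := by
    intro he; exact hσ ℓ1 ⟨p1, h11⟩ (Subtype.ext he)
  refine ⟨?_, ?_, ?_⟩
  · intro h
    have hA2 : ((σ ℓ1 ⟨p1, h11⟩ : F × F)) ∈ ℓ2.val := h ▸ (σ ℓ2 ⟨p1, h12⟩).2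
    exact hl (Subtype.ext (line_eq_of_two ℓ1.2 ℓ2.2 hAp hA1 h11 hA2 h12))
  · intro h
    have hA2 : ((σ ℓ1 ⟨p1, h11⟩ : F × F)) ∈ ℓ2.val := h ▸ (σ ℓ2 ⟨p3, h32⟩).2
    exact hl (Subtype.ext (line_eq_of_two ℓ1.2 ℓ2.2 hAp hA1 h11 hA2 h12))
  · intro h
    exact hp (congrArg Subtype.val ((σ ℓ2).injective (Subtype.ext h)))

lemma key (σ : ∀ ℓ : {ℓ : Set (F × F) // IsAffineLine F ℓ},
      (ℓ : Set (F × F)) ≃ (ℓ : Set (F × F)))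
    (hσ : ∀ ℓ, ∀ x, σ ℓ x ≠ x)
    (x y z : {x : (F × F) × {ℓ : Set (F × F) // IsAffineLine F ℓ} //
        x.1 ∈ (x.2 : Set (F × F))})
    (hxy : x ≠ y) (hxz : x ≠ z) (hyz : y ≠ z) :
    (x.1.1 ≠ y.1.1 ∧ x.1.1 ≠ z.1.1 ∧ y.1.1 ≠ z.1.1) ∨
    (x.1.2 ≠ y.1.2 ∧ x.1.2 ≠ z.1.2 ∧ y.1.2 ≠ z.1.2) ∨
    (((σ x.1.2 ⟨x.1.1, x.2⟩ : F × F) ≠ (σ y.1.2 ⟨y.1.1, y.2⟩ : F × F)) ∧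
     ((σ x.1.2 ⟨x.1.1, x.2⟩ : F × F) ≠ (σ z.1.2 ⟨z.1.1, z.2⟩ : F × F)) ∧
     ((σ y.1.2 ⟨y.1.1, y.2⟩ : F × F) ≠ (σ z.1.2 ⟨z.1.1, z.2⟩ : F × F))) := by
  obtain ⟨⟨px, lx⟩, mx⟩ := x
  obtain ⟨⟨py, ly⟩, my⟩ := y
  obtain ⟨⟨pz, lz⟩, mz⟩ := z
  simp only [ne_eq, Subtype.mk.injEq, Prod.mk.injEq, not_and] at hxy hxz hyz
  simp only []
  by_cases hp12 : px = py
  · subst hp12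
    have hl12 : lx ≠ ly := hxy rfl
    by_cases hl13 : lx = lz
    · subst hl13
      have hp13 : px ≠ pz := fun h => hxz h rfl
      have H := pattern' σ hσ ly lx px pz my mx mz hl12.symm hp13
      exact Or.inr (Or.inr ⟨fun h => H.1 h.symm, H.2.2, H.2.1⟩)
    · by_cases hl23 : ly = lz
      · subst hl23
        have hp13 : px ≠ pz := fun h => hyz h rfl
        have H := pattern' σ hσ lx ly px pz mx my mz hl12 hp13
        exact Or.inr (Or.inr H)
      · exact Or.inr (Or.inl ⟨hl12, hl13, hl23⟩)
  · by_cases hp13 : px = pz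
    · subst hp13
      have hl13 : lx ≠ lz := hxz rfl
      by_cases hl12 : lx = ly
      · subst hl12
        have H := pattern' σ hσ lz lx px py mz mx my hl13.symm hp12
        exact Or.inr (Or.inr ⟨H.2.2, fun h => H.1 h.symm, fun h => H.2.1 h.symm⟩)
      · by_cases hl23 : ly = lz
        · subst hl23
          have H := pattern' σ hσ lx ly px py mx mz my hl12 hp12
          exact Or.inr (Or.inr ⟨H.2.1, H.1, fun h => H.2.2 h.symm⟩)
        · exact Or.inr (Or.inl ⟨hl12, hl13, hl23⟩)
    · by_cases hp23 : py = pz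
      · subst hp23
        have hl23 : ly ≠ lz := hyz rfl
        by_cases hl12 : lx = ly
        · subst hl12
          have H := pattern' σ hσ lz lx py px mz my mx hl23.symm (fun h => hp12 h.symm)
          exact Or.inr (Or.inr ⟨fun h => H.2.2 h.symm, fun h => H.2.1 h.symm, fun h => H.1 h.symm⟩)
        · by_cases hl13 : lx = lz
          · subst hl13
            have H := pattern' σ hσ ly lx py px my mz mx hl23 (fun h => hp12 h.symm)
            exact Or.inr (Or.inr ⟨fun h => H.2.1 h.symm, fun h => H.2.2 h.symm, H.1⟩)
          · exact Or.inr (Or.inl ⟨hl12, hl13, hl23⟩)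
      · exact Or.inl ⟨hp12, hp13, hp23⟩

-- counting lemmas

def slopeLine (a b : F) : Set (F × F) := {p | p.2 = a * p.1 + b}
def vertLine (c : F) : Set (F × F) := {p | p.1 = c}

lemma slopeLine_isLine (a b : F) : IsAffineLine F (slopeLine a b) := by
  refine ⟨(0, b), (1, a), by simp [Prod.ext_iff], ?_⟩
  ext ⟨x, y⟩
  simp only [slopeLine, Set.mem_setOf_eq, Prod.smul_mk, Prod.mk_add_mk, Prod.mk.injEq,
    smul_eq_mul]
  constructor
  · intro h
    exact ⟨x, by ring, by rw [h]; ring⟩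
  · rintro ⟨t, h1, h2⟩
    subst h1; subst h2; ring

lemma vertLine_isLine (c : F) : IsAffineLine F (vertLine c) := by
  refine ⟨(c, 0), (0, 1), by simp [Prod.ext_iff], ?_⟩
  ext ⟨x, y⟩
  simp only [vertLine, Set.mem_setOf_eq, Prod.smul_mk, Prod.mk_add_mk, Prod.mk.injEq,
    smul_eq_mul]
  constructor
  · intro h
    exact ⟨y, by rw [h]; ring, by ring⟩
  · rintro ⟨t, h1, h2⟩
    subst h1; ring

lemma line_cases (ℓ : Set (F × F)) (h : IsAffineLine F ℓ) :
    (∃ a b, ℓ = slopeLine a b) ∨ ∃ c, ℓ = vertLine c := by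
  obtain ⟨v, d, hd, rfl⟩ := h
  by_cases hd1 : d.1 = 0
  · right
    refine ⟨v.1, ?_⟩
    have hd2 : d.2 ≠ 0 := fun h2 => hd (Prod.ext hd1 h2)
    ext p
    simp only [vertLine, Set.mem_setOf_eq]
    constructor
    · rintro ⟨t, rfl⟩; simp [hd1, smul_eq_mul]
    · intro h
      refine ⟨(p.2 - v.2)/d.2, ?_⟩
      rw [Prod.ext_iff]
      constructor
      · simp [hd1, h, smul_eq_mul]
      · simp only [Prod.snd_add, Prod.smul_snd, smul_eq_mul]
        field_simp
        ring
  · left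
    refine ⟨d.2 / d.1, v.2 - d.2 / d.1 * v.1, ?_⟩
    ext p
    simp only [slopeLine, Set.mem_setOf_eq]
    constructor
    · rintro ⟨t, rfl⟩
      simp only [Prod.snd_add, Prod.fst_add, Prod.smul_snd, Prod.smul_fst, smul_eq_mul]
      field_simp
      ring
    · intro h
      refine ⟨(p.1 - v.1)/d.1, ?_⟩
      rw [Prod.ext_iff]
      constructor
      · simp only [Prod.fst_add, Prod.smul_fst, smul_eq_mul]
        field_simp
        ring
      · simp only [Prod.snd_add, Prod.smul_snd, smul_eq_mul]
        rw [h]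
        field_simp
        ring

lemma lines_ncard [Fintype F] :
    Nat.card {ℓ : Set (F × F) // IsAffineLine F ℓ}
      = Fintype.card F ^ 2 + Fintype.card F := by
  classical
  have hbij : Function.Bijective
      (Sum.elim (fun ab : F × F => (⟨slopeLine ab.1 ab.2, slopeLine_isLine ab.1 ab.2⟩ :
          {ℓ : Set (F × F) // IsAffineLine F ℓ}))
        (fun c : F => ⟨vertLine c, vertLine_isLine c⟩)) := by
    constructor
    · rintro (⟨a, b⟩ | c) (⟨a', b'⟩ | c') h
      · have hs : slopeLine a b = slopeLine a' b' := congrArg Subtype.val h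
        have h0 : (0, b) ∈ slopeLine a b := by simp [slopeLine]
        have h1 : ((1 : F), a + b) ∈ slopeLine a b := by simp [slopeLine]
        rw [hs] at h0 h1
        simp only [slopeLine, Set.mem_setOf_eq] at h0 h1
        have hb : b = b' := by rw [h0]; ring
        subst hb
        have ha : a = a' := by
          have := h1; rw [mul_one] at this; exact add_right_cancel this
        subst ha; rfl
      · exfalso
        have hs : slopeLine a b = vertLine c' := congrArg Subtype.val h
        have h0 : ((c' + 1 : F), a * (c' + 1) + b) ∈ slopeLine a b := by simp [slopeLine]
        rw [hs] at h0
        simp only [vertLine, Set.mem_setOf_eq] at h0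
        exact one_ne_zero (add_left_cancel (by rw [h0, add_zero]) : (1 : F) = 0)
      · exfalso
        have hs : vertLine c = slopeLine a' b' := congrArg Subtype.val h
        have h0 : ((c + 1 : F), a' * (c + 1) + b') ∈ slopeLine a' b' := by simp [slopeLine]
        rw [← hs] at h0
        simp only [vertLine, Set.mem_setOf_eq] at h0
        exact one_ne_zero (add_left_cancel (by rw [h0, add_zero]) : (1 : F) = 0)
      · have hs : vertLine c = vertLine c' := congrArg Subtype.val h
        have h0 : ((c : F), (0 : F)) ∈ vertLine c := by simp [vertLine]
        rw [hs] at h0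
        simp only [vertLine, Set.mem_setOf_eq] at h0
        rw [h0]
    · rintro ⟨ℓ, hℓ⟩
      rcases line_cases ℓ hℓ with ⟨a, b, rfl⟩ | ⟨c, rfl⟩
      · exact ⟨Sum.inl (a, b), rfl⟩
      · exact ⟨Sum.inr c, rfl⟩
  rw [← Nat.card_eq_of_bijective _ hbij, Nat.card_sum, Nat.card_prod,
    Nat.card_eq_fintype_card, sq]

lemma line_ncard [Fintype F] (ℓ : Set (F × F)) (h : IsAffineLine F ℓ) :
    Nat.card ℓ = Fintype.card F := by
  obtain ⟨v, d, hd, rfl⟩ := h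
  have hbij : Function.Bijective
      (fun t : F => (⟨v + t • d, t, rfl⟩ : {p : F × F // ∃ s : F, p = v + s • d})) := by
    constructor
    · intro t t' h
      have h2 : v + t • d = v + t' • d := congrArg Subtype.val h
      have h3 : (t - t') • d = 0 := by
        have := add_left_cancel h2
        rw [sub_smul, this, sub_self]
      rcases smul_eq_zero.mp h3 with h4 | h4
      · exact sub_eq_zero.mp h4
      · exact absurd h4 hd
    · rintro ⟨p, t, rfl⟩
      exact ⟨t, rfl⟩
  rw [← Nat.card_eq_fintype_card]
  exact (Nat.card_eq_of_bijective _ hbij).symm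

lemma inc_ncard [Fintype F] :
    Nat.card {x : (F × F) × {ℓ : Set (F × F) // IsAffineLine F ℓ} //
        x.1 ∈ (x.2 : Set (F × F))}
      = Fintype.card F ^ 3 + Fintype.card F ^ 2 := by
  classical
  have e : {x : (F × F) × {ℓ : Set (F × F) // IsAffineLine F ℓ} //
        x.1 ∈ (x.2 : Set (F × F))} ≃
      Σ ℓ : {ℓ : Set (F × F) // IsAffineLine F ℓ}, (ℓ : Set (F × F)) :=
    { toFun := fun x => ⟨x.1.2, ⟨x.1.1, x.2⟩⟩
      invFun := fun y => ⟨(y.2.val, y.1), y.2.2⟩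
      left_inv := fun x => rfl
      right_inv := fun y => rfl }
  rw [Nat.card_congr e]
  have : Finite {ℓ : Set (F × F) // IsAffineLine F ℓ} := inferInstance
  have inst := Fintype.ofFinite {ℓ : Set (F × F) // IsAffineLine F ℓ}
  have inst2 : ∀ ℓ : {ℓ : Set (F × F) // IsAffineLine F ℓ},
      Fintype (ℓ : Set (F × F)) := fun ℓ => Fintype.ofFinite _
  rw [Nat.card_eq_fintype_card, Fintype.card_sigma]
  have hterm : ∀ ℓ : {ℓ : Set (F × F) // IsAffineLine F ℓ},
      Fintype.card (ℓ : Set (F × F)) = Fintype.card F := by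
    intro ℓ
    rw [← Nat.card_eq_fintype_card, line_ncard ℓ.1 ℓ.2]
  rw [Finset.sum_congr rfl (fun ℓ _ => hterm ℓ), Finset.sum_const, Finset.card_univ,
    smul_eq_mul, ← Nat.card_eq_fintype_card, lines_ncard]
  ring

end Aux

theorem incidence_code_trifferent (F : Type*) [Field F] [Fintype F] (n : ℕ)
    (φ : F × F → (Fin n → Fin 3))
    (ψ : {ℓ : Set (F × F) // IsAffineLine F ℓ} → (Fin n → Fin 3))
    (hφ : Function.Injective φ) (hψ : Function.Injective ψ)
    (hφt : TrifferentSet (Set.range φ)) (hψt : TrifferentSet (Set.range ψ))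
    (σ : ∀ ℓ : {ℓ : Set (F × F) // IsAffineLine F ℓ},
      (ℓ : Set (F × F)) ≃ (ℓ : Set (F × F)))
    (hσ : ∀ ℓ, ∀ x, σ ℓ x ≠ x) :
    TrifferentSet (Set.range fun x : {x : (F × F) × {ℓ : Set (F × F) // IsAffineLine F ℓ} //
        x.1 ∈ (x.2 : Set (F × F))} =>
      fun ki : Fin 3 × Fin n =>
        if ki.1 = 0 then φ x.1.1 ki.2
        else if ki.1 = 1 then ψ x.1.2 ki.2
        else φ ((σ x.1.2 ⟨x.1.1, x.2⟩ : Set.Elem (x.1.2 : Set (F × F))) : F × F) ki.2) ∧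
    Nat.card (Set.range fun x : {x : (F × F) × {ℓ : Set (F × F) // IsAffineLine F ℓ} //
        x.1 ∈ (x.2 : Set (F × F))} =>
      fun ki : Fin 3 × Fin n =>
        if ki.1 = 0 then φ x.1.1 ki.2
        else if ki.1 = 1 then ψ x.1.2 ki.2
        else φ ((σ x.1.2 ⟨x.1.1, x.2⟩ : Set.Elem (x.1.2 : Set (F × F))) : F × F) ki.2)
      = Fintype.card F ^ 3 + Fintype.card F ^ 2 := by
  set τ := (fun x : {x : (F × F) × {ℓ : Set (F × F) // IsAffineLine F ℓ} //
        x.1 ∈ (x.2 : Set (F × F))} =>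
      fun ki : Fin 3 × Fin n =>
        if ki.1 = 0 then φ x.1.1 ki.2
        else if ki.1 = 1 then ψ x.1.2 ki.2
        else φ ((σ x.1.2 ⟨x.1.1, x.2⟩ : Set.Elem (x.1.2 : Set (F × F))) : F × F) ki.2)
    with hτdef
  have hτ0 : ∀ x i, τ x (0, i) = φ x.1.1 i := fun x i => rfl
  have hτ1 : ∀ x i, τ x (1, i) = ψ x.1.2 i := fun x i => rfl
  have hτ2 : ∀ x i, τ x (2, i) = φ ((σ x.1.2 ⟨x.1.1, x.2⟩ : F × F)) i := fun x i => rfl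
  have hτinj : Function.Injective τ := by
    intro x y h
    have h0 : φ x.1.1 = φ y.1.1 := funext fun i => by
      rw [← hτ0 x i, ← hτ0 y i, h]
    have h1 : ψ x.1.2 = ψ y.1.2 := funext fun i => by
      rw [← hτ1 x i, ← hτ1 y i, h]
    exact Subtype.ext (Prod.ext (hφ h0) (hψ h1))
  constructor
  · rintro a ⟨x, rfl⟩ b ⟨y, rfl⟩ c ⟨z, rfl⟩ hab hac hbc
    have hxy : x ≠ y := fun h => hab (by rw [h])
    have hxz : x ≠ z := fun h => hac (by rw [h])
    have hyz : y ≠ z := fun h => hbc (by rw [h])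
    rcases key σ hσ x y z hxy hxz hyz with ⟨h1, h2, h3⟩ | ⟨h1, h2, h3⟩ | ⟨h1, h2, h3⟩
    · obtain ⟨i, hi⟩ := hφt (φ x.1.1) ⟨_, rfl⟩ (φ y.1.1) ⟨_, rfl⟩ (φ z.1.1) ⟨_, rfl⟩
        (fun h => h1 (hφ h)) (fun h => h2 (hφ h)) (fun h => h3 (hφ h))
      refine ⟨(0, i), ?_⟩
      rw [hτ0 x i, hτ0 y i, hτ0 z i]
      exact hi
    · obtain ⟨i, hi⟩ := hψt (ψ x.1.2) ⟨_, rfl⟩ (ψ y.1.2) ⟨_, rfl⟩ (ψ z.1.2) ⟨_, rfl⟩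
        (fun h => h1 (hψ h)) (fun h => h2 (hψ h)) (fun h => h3 (hψ h))
      refine ⟨(1, i), ?_⟩
      rw [hτ1 x i, hτ1 y i, hτ1 z i]
      exact hi
    · obtain ⟨i, hi⟩ := hφt (φ (σ x.1.2 ⟨x.1.1, x.2⟩ : F × F)) ⟨_, rfl⟩
        (φ (σ y.1.2 ⟨y.1.1, y.2⟩ : F × F)) ⟨_, rfl⟩
        (φ (σ z.1.2 ⟨z.1.1, z.2⟩ : F × F)) ⟨_, rfl⟩
        (fun h => h1 (hφ h)) (fun h => h2 (hφ h)) (fun h => h3 (hφ h))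
      refine ⟨(2, i), ?_⟩
      rw [hτ2 x i, hτ2 y i, hτ2 z i]
      exact hi
  · rw [Nat.card_range_of_injective hτinj, inc_ncard]
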